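/- arXiv:1703.04547 — 2 statements merged into one kernel-verified Lean document; each statement's English description precedes it below -/
import Mathlib

section
/- (Condition number theorem) Let A ∈ ℝ^{n×n} be nonzero and let 1 ≤ r, s ≤ ∞. Then κ_{rs}(A) = ‖A‖_{rs} / d_{rs}(A, Σ), where κ_{rs}(A) = ‖A‖_{rs}‖A⁻¹‖_{sr} if A is invertible and κ_{rs}(A) = ∞ if A is singular (interpreted in the extended reals). -/
open scoped ENNReal
open MeasureTheory ProbabilityTheory Filter Topology

/-- The ℓ^p norm on ℝ^n. -/
noncomputable def lpNorm {n : ℕ} (p : ℝ≥0∞) (x : Fin n → ℝ) : ℝ :=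
  ‖(show PiLp p (fun _ : Fin n => ℝ) from WithLp.toLp p x)‖

/-- The operator norm ‖B‖_{rs} = sup_{x ≠ 0} ‖Bx‖_s / ‖x‖_r of a matrix
B : ℝ^{n×m}, where the domain ℝ^m carries the ℓ^r norm and the codomain ℝ^n
carries the ℓ^s norm. -/
noncomputable def opNorm {n m : ℕ} (r s : ℝ≥0∞) (B : Matrix (Fin n) (Fin m) ℝ) : ℝ :=
  sSup {c : ℝ | ∃ x : Fin m → ℝ, x ≠ 0 ∧ c = lpNorm s (B.mulVec x) / lpNorm r x}

noncomputable def matCLM {n m : ℕ} (r s : ℝ≥0∞) [Fact (1 ≤ r)] [Fact (1 ≤ s)]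
    (B : Matrix (Fin n) (Fin m) ℝ) :
    PiLp r (fun _ : Fin m => ℝ) →L[ℝ] PiLp s (fun _ : Fin n => ℝ) :=
  LinearMap.toContinuousLinearMap
    ((WithLp.linearEquiv s ℝ _).symm.toLinearMap ∘ₗ Matrix.toLin' B ∘ₗ
      (WithLp.linearEquiv r ℝ _).toLinearMap)

lemma matCLM_apply {n m : ℕ} (r s : ℝ≥0∞) [Fact (1 ≤ r)] [Fact (1 ≤ s)]
    (B : Matrix (Fin n) (Fin m) ℝ) (x : Fin m → ℝ) :
    matCLM r s B ((WithLp.equiv r _).symm x) = (WithLp.equiv s _).symm (B.mulVec x) := rfl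

lemma lpNorm_eq {n : ℕ} (p : ℝ≥0∞) [Fact (1 ≤ p)] (x : Fin n → ℝ) :
    lpNorm p x = ‖(WithLp.equiv p (Fin n → ℝ)).symm x‖ := rfl

lemma opNorm_eq_norm {n m : ℕ} [NeZero m] (r s : ℝ≥0∞) [Fact (1 ≤ r)] [Fact (1 ≤ s)]
    (B : Matrix (Fin n) (Fin m) ℝ) :
    opNorm r s B = ‖matCLM r s B‖ := by
  have key : ∀ x : Fin m → ℝ,
      lpNorm s (B.mulVec x) / lpNorm r x
        = ‖matCLM r s B ((WithLp.equiv r _).symm x)‖ / ‖(WithLp.equiv r _).symm x‖ := by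
    intro x
    rw [matCLM_apply, lpNorm_eq, lpNorm_eq]
  have hex : ∃ x : Fin m → ℝ, x ≠ 0 := by
    refine ⟨fun _ => 1, ?_⟩
    intro h
    have := congrFun h (Classical.arbitrary (Fin m))
    simp at this
  obtain ⟨x₀, hx₀⟩ := hex
  have hne : {c : ℝ | ∃ x : Fin m → ℝ, x ≠ 0 ∧ c = lpNorm s (B.mulVec x) / lpNorm r x}.Nonempty :=
    ⟨_, x₀, hx₀, rfl⟩
  have hub : ∀ c ∈ {c : ℝ | ∃ x : Fin m → ℝ, x ≠ 0 ∧ c = lpNorm s (B.mulVec x) / lpNorm r x},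
      c ≤ ‖matCLM r s B‖ := by
    rintro c ⟨x, hx, rfl⟩
    rw [key]
    exact (matCLM r s B).ratio_le_opNorm _
  refine le_antisymm (csSup_le hne hub) ?_
  have hnonneg : (0:ℝ) ≤ opNorm r s B := by
    have h0 : (0:ℝ) ≤ lpNorm s (B.mulVec x₀) / lpNorm r x₀ := by rw [key]; positivity
    exact h0.trans (le_csSup ⟨_, hub⟩ ⟨x₀, hx₀, rfl⟩)
  refine (matCLM r s B).opNorm_le_bound hnonneg ?_
  intro y
  set x : Fin m → ℝ := WithLp.equiv r _ y with hxdef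
  have hyx : y = (WithLp.equiv r _).symm x := rfl
  by_cases hx : x = 0
  · have : y = 0 := by rw [hyx, hx]; simp
    simp [this]
  · have hmem : lpNorm s (B.mulVec x) / lpNorm r x ∈
        {c : ℝ | ∃ x : Fin m → ℝ, x ≠ 0 ∧ c = lpNorm s (B.mulVec x) / lpNorm r x} :=
      ⟨x, hx, rfl⟩
    have hle := le_csSup ⟨_, hub⟩ hmem
    rw [key] at hle
    rw [← hyx] at hle
    have hy0 : (0:ℝ) < ‖y‖ := by
      rw [norm_pos_iff]
      intro h0
      exact hx (by rw [hyx] at h0; simpa using congrArg (WithLp.equiv r _) h0)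
    calc ‖matCLM r s B y‖ = (‖matCLM r s B y‖ / ‖y‖) * ‖y‖ := by field_simp
    _ ≤ opNorm r s B * ‖y‖ := by exact mul_le_mul_of_nonneg_right hle hy0.le

lemma opNorm_pos {n m : ℕ} [NeZero m] (r s : ℝ≥0∞) [Fact (1 ≤ r)] [Fact (1 ≤ s)]
    (B : Matrix (Fin n) (Fin m) ℝ) (hB : B ≠ 0) : 0 < opNorm r s B := by
  rw [opNorm_eq_norm]
  rcases eq_or_lt_of_le (norm_nonneg (matCLM r s B)) with h | h
  · exfalso
    apply hB
    have h0 : matCLM r s B = 0 := ((matCLM r s B).opNorm_zero_iff).mp h.symm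
    have hmv : ∀ x : Fin m → ℝ, B.mulVec x = 0 := by
      intro x
      have h1 : matCLM r s B ((WithLp.equiv r _).symm x) = 0 := by rw [h0]; rfl
      rw [matCLM_apply] at h1
      exact (WithLp.equiv s _).symm.injective h1
    have htl : Matrix.toLin' B = 0 := by
      ext x
      simp [Matrix.toLin'_apply, hmv]
    calc B = LinearMap.toMatrix' (Matrix.toLin' B) := (LinearMap.toMatrix'_toLin' B).symm
      _ = 0 := by rw [htl]; simp
  · exact h

lemma opNorm_nonneg' {n m : ℕ} [NeZero m] (r s : ℝ≥0∞) [Fact (1 ≤ r)] [Fact (1 ≤ s)]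
    (B : Matrix (Fin n) (Fin m) ℝ) : 0 ≤ opNorm r s B := by
  rw [opNorm_eq_norm]; exact norm_nonneg _

lemma dist_lower {n : ℕ} [NeZero n] (r s : ℝ≥0∞) [Fact (1 ≤ r)] [Fact (1 ≤ s)]
    (A E : Matrix (Fin n) (Fin n) ℝ) (hdet : IsUnit A.det) (hE : ¬ IsUnit E.det) :
    1 / opNorm s r A⁻¹ ≤ opNorm r s (A - E) := by
  have hNpos : 0 < opNorm s r A⁻¹ := by
    apply opNorm_pos
    intro h0
    have := Matrix.nonsing_inv_mul A hdet
    rw [h0, zero_mul] at this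
    exact one_ne_zero this.symm
  obtain ⟨v, hv, hEv⟩ := (Matrix.exists_mulVec_eq_zero_iff (M := E)).mpr
    (by rw [isUnit_iff_ne_zero, not_not] at hE; exact hE)
  have hAEv : (A - E).mulVec v = A.mulVec v := by
    rw [Matrix.sub_mulVec, hEv, sub_zero]
  set vr := (WithLp.equiv r (Fin n → ℝ)).symm v with hvr
  have hvrpos : 0 < ‖vr‖ := by
    rw [norm_pos_iff]
    intro h0
    exact hv ((WithLp.equiv r _).symm.injective h0)
  have hrec : A⁻¹.mulVec ((A - E).mulVec v) = v := by
    rw [hAEv, Matrix.mulVec_mulVec, Matrix.nonsing_inv_mul A hdet, Matrix.one_mulVec]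
  have hchain : ‖vr‖ ≤ opNorm s r A⁻¹ * (opNorm r s (A - E) * ‖vr‖) := by
    have h1 : vr = matCLM s r A⁻¹ ((WithLp.equiv s _).symm ((A - E).mulVec v)) := by
      rw [matCLM_apply, hrec]
    calc ‖vr‖ = ‖matCLM s r A⁻¹ ((WithLp.equiv s _).symm ((A - E).mulVec v))‖ := by rw [← h1]
      _ ≤ ‖matCLM s r A⁻¹‖ * ‖(WithLp.equiv s _).symm ((A - E).mulVec v)‖ :=
          (matCLM s r A⁻¹).le_opNorm _
      _ = ‖matCLM s r A⁻¹‖ * ‖matCLM r s (A - E) vr‖ := by rw [← matCLM_apply r s (A - E) v]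
      _ ≤ ‖matCLM s r A⁻¹‖ * (‖matCLM r s (A - E)‖ * ‖vr‖) := by
          apply mul_le_mul_of_nonneg_left ((matCLM r s (A - E)).le_opNorm _) (norm_nonneg _)
      _ = opNorm s r A⁻¹ * (opNorm r s (A - E) * ‖vr‖) := by
          rw [opNorm_eq_norm, opNorm_eq_norm]
  rw [div_le_iff₀ hNpos]
  have := (mul_le_mul_iff_of_pos_right hvrpos).mp (by linarith [hchain] : 1 * ‖vr‖ ≤ opNorm s r A⁻¹ * opNorm r s (A - E) * ‖vr‖)
  linarith [this]

lemma dist_upper {n : ℕ} [NeZero n] (r s : ℝ≥0∞) [Fact (1 ≤ r)] [Fact (1 ≤ s)]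
    (A : Matrix (Fin n) (Fin n) ℝ) (hdet : IsUnit A.det) (θ : ℝ) (hθ : 0 < θ)
    (hθN : θ < opNorm s r A⁻¹) :
    ∃ E : Matrix (Fin n) (Fin n) ℝ, ¬ IsUnit E.det ∧ opNorm r s (A - E) < 1 / θ := by
  -- find x ≠ 0 with ratio > θ
  have hne : {c : ℝ | ∃ x : Fin n → ℝ, x ≠ 0 ∧ c = lpNorm r (A⁻¹.mulVec x) / lpNorm s x}.Nonempty := by
    refine ⟨_, fun _ => 1, ?_, rfl⟩
    intro h
    have := congrFun h (Classical.arbitrary (Fin n))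
    simp at this
  obtain ⟨c, ⟨x, hx, rfl⟩, hc⟩ := exists_lt_of_lt_csSup hne hθN
  set u := A⁻¹.mulVec x with hu
  have hxs : (0:ℝ) < lpNorm s x := by
    rw [lpNorm_eq, norm_pos_iff]
    intro h0; exact hx ((WithLp.equiv s _).symm.injective h0)
  have hur : 0 < lpNorm r u := by
    rcases lt_or_ge 0 (lpNorm r u) with h | h
    · exact h
    · exfalso
      have : lpNorm r u / lpNorm s x ≤ 0 := div_nonpos_of_nonpos_of_nonneg h hxs.le
      linarith
  have hune : u ≠ 0 := by
    intro h0
    rw [lpNorm_eq, h0] at hur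
    simp at hur
  set ur := (WithLp.equiv r (Fin n → ℝ)).symm u with hurdef
  have hurn : ‖ur‖ = lpNorm r u := rfl
  have hurne : ur ≠ 0 := fun h0 => hune ((WithLp.equiv r _).symm.injective h0)
  obtain ⟨f, hf1, hfu⟩ := exists_dual_vector ℝ ur (norm_ne_zero_iff.mpr hurne)
  set xs := (WithLp.equiv s (Fin n → ℝ)).symm x with hxsdef
  set D : PiLp r (fun _ : Fin n => ℝ) →L[ℝ] PiLp s (fun _ : Fin n => ℝ) :=
    (‖ur‖⁻¹ : ℝ) • (f.smulRight xs) with hD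
  have hDnorm : ‖D‖ = ‖xs‖ / ‖ur‖ := by
    rw [hD, norm_smul ‖ur‖⁻¹ (f.smulRight xs), ContinuousLinearMap.norm_smulRight_apply, hf1, one_mul,
      Real.norm_eq_abs, abs_inv, abs_norm]
    ring
  -- the matrix of D
  set g : (Fin n → ℝ) →ₗ[ℝ] (Fin n → ℝ) :=
    (WithLp.linearEquiv s ℝ _).toLinearMap ∘ₗ (D : PiLp r _ →ₗ[ℝ] PiLp s _) ∘ₗ
      (WithLp.linearEquiv r ℝ _).symm.toLinearMap with hg
  set Dmat := LinearMap.toMatrix' g with hDmat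
  have hmv : ∀ v : Fin n → ℝ, Dmat.mulVec v = WithLp.equiv s _ (D ((WithLp.equiv r _).symm v)) := by
    intro v
    rw [← Matrix.toLin'_apply, hDmat, Matrix.toLin'_toMatrix']
    rfl
  have hfu' : f ur = ‖ur‖ := by exact_mod_cast hfu
  have hDu : D ur = xs := by
    rw [hD]
    simp only [ContinuousLinearMap.smul_apply, ContinuousLinearMap.smulRight_apply, hfu']
    rw [smul_smul, inv_mul_cancel₀ (norm_ne_zero_iff.mpr hurne), one_smul]
  refine ⟨A - Dmat, ?_, ?_⟩
  · have hEu : (A - Dmat).mulVec u = 0 := by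
      rw [Matrix.sub_mulVec]
      have h1 : A.mulVec u = x := by
        rw [hu, Matrix.mulVec_mulVec, Matrix.mul_nonsing_inv A hdet, Matrix.one_mulVec]
      have h2 : Dmat.mulVec u = x := by
        rw [hmv u, show (WithLp.equiv r (Fin n → ℝ)).symm u = ur from rfl, hDu]
        rfl
      rw [h1, h2, sub_self]
    have hdet0 : (A - Dmat).det = 0 :=
      (Matrix.exists_mulVec_eq_zero_iff (M := A - Dmat)).mp ⟨u, hune, hEu⟩
    rw [isUnit_iff_ne_zero, not_not]
    exact hdet0
  · have hDm : matCLM r s Dmat = D := by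
      refine ContinuousLinearMap.ext fun y => ?_
      have h := matCLM_apply r s Dmat (WithLp.equiv r _ y)
      rw [Equiv.symm_apply_apply] at h
      rw [h, hmv, Equiv.symm_apply_apply, Equiv.symm_apply_apply]
    have hAD : A - (A - Dmat) = Dmat := by abel
    rw [hAD, opNorm_eq_norm, hDm, hDnorm]
    have hxsn : ‖xs‖ = lpNorm s x := rfl
    have hurpos : (0:ℝ) < ‖ur‖ := by rw [hurn]; exact hur
    rw [div_lt_div_iff₀ hurpos hθ, hxsn, hurn]
    have h5 : θ * lpNorm s x < lpNorm r u := (lt_div_iff₀ hxs).mp hc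
    nlinarith [hxs, h5]

open scoped Classical

/-- Condition number theorem: for nonzero A, κ_{rs}(A) = ‖A‖_{rs} / d_{rs}(A, Σ)
in the extended reals, where κ_{rs}(A) = ‖A‖_{rs}‖A⁻¹‖_{sr} if A is invertible
and κ_{rs}(A) = ∞ otherwise, and d_{rs}(A, Σ) is the distance from A to the set
Σ of singular matrices in the ‖·‖_{rs} operator norm. -/
theorem condition_number_theorem (n : ℕ) (r s : ℝ≥0∞) (hr : 1 ≤ r) (hs : 1 ≤ s)
    (A : Matrix (Fin n) (Fin n) ℝ) (hA : A ≠ 0) :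
    (if IsUnit A.det then ENNReal.ofReal (opNorm r s A * opNorm s r A⁻¹) else (⊤ : ℝ≥0∞))
      = ENNReal.ofReal (opNorm r s A) /
          ENNReal.ofReal (sInf {c : ℝ | ∃ E : Matrix (Fin n) (Fin n) ℝ,
            ¬ IsUnit E.det ∧ c = opNorm r s (A - E)}) := by
  haveI : Fact (1 ≤ r) := ⟨hr⟩
  haveI : Fact (1 ≤ s) := ⟨hs⟩
  have hn : n ≠ 0 := by
    rintro rfl
    exact hA (Subsingleton.elim _ _)
  haveI : NeZero n := ⟨hn⟩
  set S := {c : ℝ | ∃ E : Matrix (Fin n) (Fin n) ℝ, ¬ IsUnit E.det ∧ c = opNorm r s (A - E)}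
    with hSdef
  have hApos : 0 < opNorm r s A := opNorm_pos r s A hA
  have hSbdd : BddBelow S := by
    refine ⟨0, ?_⟩
    rintro c ⟨E, hE, rfl⟩
    exact opNorm_nonneg' r s (A - E)
  by_cases hdet : IsUnit A.det
  · -- invertible case
    have hNpos : 0 < opNorm s r A⁻¹ := by
      apply opNorm_pos
      intro h0
      have := Matrix.nonsing_inv_mul A hdet
      rw [h0, zero_mul] at this
      exact one_ne_zero this.symm
    set N := opNorm s r A⁻¹ with hN
    have hSne : S.Nonempty := by
      obtain ⟨E, hE, hlt⟩ := dist_upper r s A hdet (N/2) (by positivity) (by linarith)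
      exact ⟨_, E, hE, rfl⟩
    have hlow : ∀ c ∈ S, 1 / N ≤ c := by
      rintro c ⟨E, hE, rfl⟩
      exact dist_lower r s A E hdet hE
    have hup : sInf S ≤ 1 / N := by
      by_contra hcon
      push_neg at hcon
      have hdpos : 0 < sInf S := lt_trans (by positivity) hcon
      set θ := (1 / sInf S + N) / 2 with hθdef
      have h1 : 1 / sInf S < N := (one_div_lt hdpos hNpos).mpr hcon
      have hθpos : 0 < θ := by positivity
      have hθlt : θ < N := by rw [hθdef]; linarith
      have hθgt : 1 / sInf S < θ := by rw [hθdef]; linarith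
      obtain ⟨E, hE, hlt⟩ := dist_upper r s A hdet θ hθpos hθlt
      have hmem : opNorm r s (A - E) ∈ S := ⟨E, hE, rfl⟩
      have h2 : sInf S ≤ opNorm r s (A - E) := csInf_le hSbdd hmem
      have h3 : 1 / θ < sInf S := by
        rw [div_lt_iff₀ hθpos, ← div_lt_iff₀' hdpos]
        exact hθgt
      linarith
    have hdist : sInf S = 1 / N := le_antisymm hup (le_csInf hSne hlow)
    rw [if_pos hdet, hdist, ← ENNReal.ofReal_div_of_pos (by positivity), one_div]
    congr 1
    field_simp
  · -- singular case
    have h0mem : (0:ℝ) ∈ S := by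
      refine ⟨A, hdet, ?_⟩
      rw [sub_self, opNorm_eq_norm]
      have : matCLM r s (0 : Matrix (Fin n) (Fin n) ℝ) = 0 := by
        refine ContinuousLinearMap.ext fun y => ?_
        have h := matCLM_apply r s (0 : Matrix (Fin n) (Fin n) ℝ) (WithLp.equiv r _ y)
        rw [Equiv.symm_apply_apply] at h
        rw [h, Matrix.zero_mulVec]
        rfl
      rw [this, norm_zero]
    have hdist : sInf S = 0 := le_antisymm (csInf_le hSbdd h0mem)
      (le_csInf ⟨0, h0mem⟩ (by rintro c ⟨E, hE, rfl⟩; exact opNorm_nonneg' r s (A - E)))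
    rw [if_neg hdet, hdist, ENNReal.ofReal_zero, ENNReal.div_zero]
    simp only [ne_eq, ENNReal.ofReal_eq_zero, not_le]
    exact hApos
end

section
/- Let n ≥ 1 and let L be a random n×n unit lower triangular matrix whose strictly lower triangular entries ℓ_{ij} (i > j) are independent standard Gaussian random variables, ℓ_{ii} = 1, and ℓ_{ij} = 0 for i < j. Then E[‖L⁻¹‖_F²] = 2ⁿ − 1, where ‖·‖_F is the Frobenius norm. -/
open scoped ENNReal
open MeasureTheory ProbabilityTheory Filter Topology

/-- The Frobenius norm of a square matrix. -/
noncomputable def frobNorm {n : ℕ} (M : Matrix (Fin n) (Fin n) ℝ) : ℝ :=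
  Real.sqrt (∑ i, ∑ j, (M i j)^2)

/-- The unit lower triangular matrix with strictly lower triangular entries
given by `g` and unit diagonal. -/
noncomputable def unitLT (n : ℕ) (g : {p : Fin n × Fin n // p.2 < p.1} → ℝ) :
    Matrix (Fin n) (Fin n) ℝ :=
  fun i j => if i = j then 1 else if h : j < i then g ⟨(i, j), h⟩ else 0

/-- The product of standard Gaussian measures over the strictly lower
triangular index set. -/
noncomputable def gaussianUnitLT (n : ℕ) :
    Measure ({p : Fin n × Fin n // p.2 < p.1} → ℝ) :=
  Measure.pi fun _ => gaussianReal 0 1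


namespace GaussFrob

open scoped NNReal
open MeasureTheory ProbabilityTheory Real Set MvPolynomial

noncomputable def mom (k : ℕ) : ℝ := ∫ x, x ^ k ∂(gaussianReal 0 1)

lemma gaussianReal_std_eq :
    gaussianReal 0 1 = volume.withDensity fun x =>
      ((Real.toNNReal (gaussianPDFReal 0 1 x) : ℝ≥0) : ℝ≥0∞) := by
  rw [gaussianReal_of_var_ne_zero 0 one_ne_zero]
  rfl

lemma integrable_gaussian_iff {f : ℝ → ℝ} :
    Integrable f (gaussianReal 0 1) ↔
      Integrable (fun x => gaussianPDFReal 0 1 x * f x) volume := by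
  rw [gaussianReal_std_eq,
    integrable_withDensity_iff_integrable_smul ((measurable_gaussianPDFReal 0 1).real_toNNReal)]
  constructor <;> intro h <;> refine h.congr (Filter.Eventually.of_forall fun x => ?_) <;>
    simp [NNReal.smul_def, Real.coe_toNNReal _ (gaussianPDFReal_nonneg 0 1 x)]

lemma integral_gaussian_eq (f : ℝ → ℝ) :
    ∫ x, f x ∂(gaussianReal 0 1) = ∫ x, gaussianPDFReal 0 1 x * f x := by
  rw [gaussianReal_std_eq, integral_withDensity_eq_integral_smul
    ((measurable_gaussianPDFReal 0 1).real_toNNReal)]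
  congr 1; ext x
  simp [NNReal.smul_def, Real.coe_toNNReal _ (gaussianPDFReal_nonneg 0 1 x)]

lemma pdf_eq (x : ℝ) : gaussianPDFReal 0 1 x = (√(2*π))⁻¹ * rexp (-(2⁻¹) * x^2) := by
  simp only [gaussianPDFReal, NNReal.coe_one, mul_one, sub_zero]
  ring_nf

lemma integrable_pdf_mul_pow (k : ℕ) :
    Integrable (fun x => gaussianPDFReal 0 1 x * x ^ k) := by
  have h : Integrable (fun x : ℝ => (√(2*π))⁻¹ * (x ^ (k:ℝ) * rexp (-(2⁻¹:ℝ) * x ^ 2))) :=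
    (integrable_rpow_mul_exp_neg_mul_sq (b := 2⁻¹) (by norm_num) (s := (k:ℝ))
      (by linarith [Nat.cast_nonneg (α := ℝ) k])).const_mul _
  refine h.norm.mono' ?_ (Filter.Eventually.of_forall fun x => ?_)
  · exact ((measurable_gaussianPDFReal 0 1).mul (measurable_id.pow_const k)).aestronglyMeasurable
  · rw [pdf_eq, Real.rpow_natCast]
    simp only [Real.norm_eq_abs, norm_norm, abs_mul,
      abs_of_nonneg (by positivity : (0:ℝ) ≤ (√(2*π))⁻¹), abs_of_nonneg (Real.exp_nonneg _)]
    exact le_of_eq (by ring)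

lemma integrable_pow_gaussian (k : ℕ) :
    Integrable (fun x : ℝ => x ^ k) (gaussianReal 0 1) :=
  integrable_gaussian_iff.mpr (integrable_pdf_mul_pow k)

lemma mom_zero : mom 0 = 1 := by
  simp [mom]

lemma mom_one : mom 1 = 0 := by
  have key := integral_neg_eq_self (fun x => gaussianPDFReal 0 1 x * x ^ 1) (volume : Measure ℝ)
  have h1 : ∀ x : ℝ, gaussianPDFReal 0 1 (-x) * (-x) ^ 1 = -(gaussianPDFReal 0 1 x * x ^ 1) := by
    intro x
    rw [pdf_eq, pdf_eq]
    ring_nf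
  rw [mom, integral_gaussian_eq]
  have h2 : ∫ x, gaussianPDFReal 0 1 x * x ^ 1 = -∫ x, gaussianPDFReal 0 1 x * x ^ 1 := by
    conv_lhs => rw [← key]
    simp_rw [h1]
    rw [integral_neg]
  linarith

lemma mom_two : mom 2 = 1 := by
  have h1 : mom 2 = (√(2*π))⁻¹ * ∫ x : ℝ, x ^ 2 * rexp (-(2⁻¹) * x^2) := by
    rw [mom, integral_gaussian_eq, ← integral_const_mul]
    congr 1; ext x; rw [pdf_eq]; ring
  have h2 : (∫ x : ℝ, x ^ 2 * rexp (-(2⁻¹) * x^2)) =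
      2 * ∫ x in Ioi (0:ℝ), x ^ 2 * rexp (-(2⁻¹) * x^2) := by
    rw [← integral_comp_abs (f := fun x => x ^ 2 * rexp (-(2⁻¹) * x^2))]
    congr 1; ext x; rw [sq_abs]
  have h3 : (∫ x in Ioi (0:ℝ), x ^ 2 * rexp (-(2⁻¹) * x^2)) =
      (2⁻¹:ℝ) ^ (-(((2:ℝ) + 1)) / 2) * (1 / 2) * Real.Gamma (((2:ℝ) + 1) / 2) := by
    rw [← integral_rpow_mul_exp_neg_mul_rpow (by norm_num) (by norm_num) (by norm_num : (0:ℝ) < 2⁻¹)]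
    refine setIntegral_congr_fun measurableSet_Ioi fun x hx => ?_
    norm_num [Real.rpow_natCast]
  have hg : Real.Gamma (((2:ℝ) + 1) / 2) = √π / 2 := by
    have h : ((2:ℝ) + 1) / 2 = 1/2 + 1 := by norm_num
    rw [h, Real.Gamma_add_one (by norm_num), Real.Gamma_one_half_eq]
    ring
  have hp : (2⁻¹:ℝ) ^ (-(((2:ℝ) + 1)) / 2) = 2 * √2 := by
    have e1 : (2⁻¹:ℝ) ^ (-(((2:ℝ)+1))/2) = (2:ℝ) ^ ((3:ℝ)/2) := by
      rw [Real.inv_rpow (by norm_num), ← Real.rpow_neg (by norm_num)]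
      norm_num
    have e2 : (2:ℝ) ^ ((3:ℝ)/2) = (2:ℝ) ^ (1:ℝ) * (2:ℝ) ^ ((1:ℝ)/2) := by
      rw [← Real.rpow_add (by norm_num)]
      norm_num
    rw [e1, e2, Real.rpow_one, ← Real.sqrt_eq_rpow]
  have hs : √2 * √π = √(2*π) := (Real.sqrt_mul (by norm_num) π).symm
  rw [h1, h2, h3, hg, hp]
  have hne : √(2*π) ≠ 0 := ne_of_gt (Real.sqrt_pos.mpr (by positivity))
  field_simp
  exact hs

variable {ι : Type*} [Fintype ι]

noncomputable def W (m : ι →₀ ℕ) : ℝ := ∏ p, mom (m p)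

noncomputable def Eexp : MvPolynomial ι ℝ →ₗ[ℝ] ℝ :=
  (Finsupp.lsum ℝ fun m => LinearMap.smulRight LinearMap.id (W m)) ∘ₗ
    (AddMonoidAlgebra.coeffLinearEquiv ℝ).toLinearMap

lemma Eexp_monomial (m : ι →₀ ℕ) (c : ℝ) : Eexp (monomial m c) = c * W m := by
  show Finsupp.lsum ℝ (fun m => LinearMap.smulRight LinearMap.id (W m))
      (Finsupp.single m c : (ι →₀ ℕ) →₀ ℝ) = c * W m
  rw [Finsupp.lsum_single]
  simp [smul_eq_mul]

lemma W_zero : W (0 : ι →₀ ℕ) = 1 := by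
  simp [W, mom_zero]

lemma Eexp_one : Eexp (1 : MvPolynomial ι ℝ) = 1 := by
  have : (1 : MvPolynomial ι ℝ) = monomial 0 1 := by simp
  rw [this, Eexp_monomial, W_zero, mul_one]

lemma W_add_single [DecidableEq ι] (p : ι) (a : ℕ) (m : ι →₀ ℕ) (hmp : m p = 0) :
    W (Finsupp.single p a + m) = mom a * W m := by
  unfold W
  rw [← Finset.mul_prod_erase Finset.univ _ (Finset.mem_univ p),
    ← Finset.mul_prod_erase Finset.univ (fun q => mom (m q)) (Finset.mem_univ p), hmp, mom_zero,
    one_mul]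
  have h1 : (Finsupp.single p a + m) p = a := by simp [hmp]
  rw [h1]
  congr 1
  refine Finset.prod_congr rfl fun q hq => ?_
  have : q ≠ p := Finset.ne_of_mem_erase hq
  simp [Finsupp.single_apply, this.symm]

lemma Eexp_X_pow_mul [DecidableEq ι] (p : ι) (a : ℕ) (Q : MvPolynomial ι ℝ)
    (h : p ∉ Q.vars) : Eexp (X p ^ a * Q) = mom a * Eexp Q := by
  conv_lhs => rw [Q.as_sum, Finset.mul_sum]
  conv_rhs => rw [Q.as_sum]
  rw [map_sum, map_sum, Finset.mul_sum]
  refine Finset.sum_congr rfl fun m hm => ?_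
  have hmp : m p = 0 := by
    by_contra h0
    exact h ((mem_vars p).mpr ⟨m, hm, Finsupp.mem_support_iff.mpr h0⟩)
  rw [X_pow_eq_monomial, monomial_mul, Eexp_monomial, Eexp_monomial, one_mul,
    W_add_single p a m hmp]
  ring

lemma eval_monomial_eq (g : ι → ℝ) (m : ι →₀ ℕ) (c : ℝ) :
    eval g (monomial m c) = c * ∏ p, g p ^ m p := by
  rw [eval_monomial]
  congr 1
  exact Finsupp.prod_fintype m _ fun p => pow_zero (g p)

lemma integrable_eval_monomial (m : ι →₀ ℕ) (c : ℝ) :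
    Integrable (fun g : ι → ℝ => eval g (monomial m c))
      (Measure.pi fun _ : ι => gaussianReal 0 1) := by
  letI : MeasureSpace ℝ := ⟨gaussianReal 0 1⟩
  haveI : SigmaFinite (volume : Measure ℝ) := by
    show SigmaFinite (gaussianReal 0 1); infer_instance
  have h : Integrable (fun g : ι → ℝ => ∏ p, g p ^ m p) volume :=
    Integrable.fintype_prod (f := fun p (x : ℝ) => x ^ m p)
      fun p => integrable_pow_gaussian (m p)
  rw [volume_pi] at h
  simp_rw [eval_monomial_eq]
  exact h.const_mul c

lemma integral_eval_monomial (m : ι →₀ ℕ) (c : ℝ) :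
    ∫ g : ι → ℝ, eval g (monomial m c) ∂(Measure.pi fun _ : ι => gaussianReal 0 1)
      = Eexp (monomial m c) := by
  letI : MeasureSpace ℝ := ⟨gaussianReal 0 1⟩
  haveI : SigmaFinite (volume : Measure ℝ) := by
    show SigmaFinite (gaussianReal 0 1); infer_instance
  have h := MeasureTheory.integral_fintype_prod_eq_prod (𝕜 := ℝ) (μ := fun _ => (volume : Measure ℝ))
    (f := fun p (x : ℝ) => x ^ m p)
  have hμ : (Measure.pi fun _ : ι => gaussianReal 0 1) = (volume : Measure (ι → ℝ)) := by
    rw [volume_pi]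
    rfl
  rw [hμ, volume_pi]
  simp_rw [eval_monomial_eq, integral_const_mul, h, Eexp_monomial]
  rfl

lemma integrable_eval (P : MvPolynomial ι ℝ) :
    Integrable (fun g : ι → ℝ => eval g P)
      (Measure.pi fun _ : ι => gaussianReal 0 1) := by
  classical
  conv in eval _ P => rw [P.as_sum]
  simp_rw [map_sum]
  exact integrable_finset_sum _ fun m _ => integrable_eval_monomial m _

lemma integral_eval (P : MvPolynomial ι ℝ) :
    ∫ g : ι → ℝ, eval g P ∂(Measure.pi fun _ : ι => gaussianReal 0 1) = Eexp P := by
  classical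
  conv_lhs => rw [P.as_sum]
  conv_rhs => rw [P.as_sum]
  simp_rw [map_sum]
  rw [integral_finset_sum _ fun m _ => integrable_eval_monomial m _]
  exact Finset.sum_congr rfl fun m _ => integral_eval_monomial m _

abbrev Idx (n : ℕ) := {p : Fin n × Fin n // p.2 < p.1}

noncomputable def Apoly {n : ℕ} (i j : Fin n) : MvPolynomial (Idx n) ℝ :=
  if h : j < i then
    -∑ k ∈ (Finset.Ico j i).attach,
      X (⟨(i, k.1), (Finset.mem_Ico.mp k.2).2⟩ : Idx n) * Apoly k.1 j
  else if i = j then 1 else 0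
termination_by i.val
decreasing_by exact (Finset.mem_Ico.mp k.2).2

lemma Apoly_diag {n : ℕ} (i : Fin n) : Apoly i i = 1 := by rw [Apoly]; simp

lemma Apoly_upper {n : ℕ} {i j : Fin n} (h : i < j) : Apoly i j = 0 := by
  rw [Apoly, dif_neg (not_lt_of_gt h), if_neg (ne_of_lt h)]

noncomputable def XA {n : ℕ} (i j k : Fin n) : MvPolynomial (Idx n) ℝ :=
  if hk : k < i then X (⟨(i, k), hk⟩ : Idx n) * Apoly k j else 0

lemma Apoly_lt {n : ℕ} {i j : Fin n} (h : j < i) :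
    Apoly i j = -∑ k ∈ Finset.Ico j i, XA i j k := by
  rw [Apoly, dif_pos h]
  congr 1
  rw [← Finset.sum_attach (Finset.Ico j i) (XA i j)]
  exact Finset.sum_congr rfl fun k _ => by
    rw [XA, dif_pos (Finset.mem_Ico.mp k.2).2]

lemma Apoly_vars {n : ℕ} (i j : Fin n) :
    ∀ p ∈ (Apoly i j).vars, p.1.1.val ≤ i.val := by
  classical
  suffices H : ∀ N (i j : Fin n), i.val < N → ∀ p ∈ (Apoly i j).vars, p.1.1.val ≤ i.val from
    H (i.val + 1) i j (Nat.lt_succ_self _)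
  intro N
  induction N with
  | zero => exact fun i j h => absurd h (Nat.not_lt_zero _)
  | succ N IH =>
    intro i j hiN p hp
    rcases lt_trichotomy j i with h | h | h
    · rw [Apoly_lt h, vars_neg] at hp
      have := vars_sum_subset (Finset.Ico j i) (XA i j) hp
      rw [Finset.mem_biUnion] at this
      obtain ⟨k, hk, hpk⟩ := this
      have hki : k < i := (Finset.mem_Ico.mp hk).2
      rw [XA, dif_pos hki] at hpk
      have := vars_mul _ _ hpk
      rcases Finset.mem_union.mp this with h1 | h1
      · rw [vars_X] at h1
        rw [Finset.mem_singleton.mp h1]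
      · have hk2 : k.val < N := by omega
        exact le_trans (IH k j hk2 p h1) (le_of_lt hki)
    · rw [h, Apoly_diag] at hp
      simp [vars_one] at hp
    · rw [Apoly_upper h] at hp
      simp [vars_0] at hp

lemma unitLT_mul_eval {n : ℕ} (g : Idx n → ℝ) :
    unitLT n g * (Matrix.of fun i j => eval g (Apoly i j)) = 1 := by
  ext i j
  rw [Matrix.mul_apply]
  have hL : ∀ k, unitLT n g i k =
      if i = k then 1 else if h : k < i then g ⟨(i, k), h⟩ else 0 := fun k => rfl
  by_cases hij : i = j
  · subst hij
    rw [Matrix.one_apply_eq]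
    rw [Finset.sum_eq_single i]
    · simp [hL, Apoly_diag]
    · intro k _ hk
      rcases lt_or_gt_of_ne hk with h | h
      · simp [Matrix.of_apply, Apoly_upper h]
      · rw [hL, if_neg (ne_of_lt h), dif_neg (not_lt_of_gt h), zero_mul]
    · intro h; exact absurd (Finset.mem_univ i) h
  · rcases lt_or_gt_of_ne hij with hij' | hij'
    -- i < j : all terms vanish
    · rw [Matrix.one_apply_ne hij]
      refine Finset.sum_eq_zero fun k _ => ?_
      by_cases hkj : k < j
      · simp [Matrix.of_apply, Apoly_upper hkj]
      · have hik : i ≠ k := by intro e; exact hkj (e ▸ hij')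
        have : ¬ k < i := by
          intro h; exact hkj (lt_trans h hij')
        rw [hL, if_neg hik, dif_neg this, zero_mul]
    -- j < i
    · rw [Matrix.one_apply_ne hij]
      have hsub : Finset.Ico j i ⊆ Finset.univ := Finset.subset_univ _
      have hstep : ∑ k, unitLT n g i k * (Matrix.of fun i j => eval g (Apoly i j)) k j
          = ∑ k ∈ insert i (Finset.Ico j i),
              unitLT n g i k * (Matrix.of fun i j => eval g (Apoly i j)) k j := by
        refine (Finset.sum_subset (Finset.subset_univ _) fun k _ hk => ?_).symm
        rw [Finset.mem_insert, Finset.mem_Ico, not_or, not_and_or] at hk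
        obtain ⟨hki, hk2⟩ := hk
        rcases hk2 with h | h
        · push_neg at h
          simp [Matrix.of_apply, Apoly_upper h]
        · push_neg at h
          have : ¬ k < i := not_lt_of_ge h
          rw [hL, if_neg (fun e => hki e.symm), dif_neg this, zero_mul]
      rw [hstep, Finset.sum_insert (by simp [Finset.mem_Ico])]
      have hLi : unitLT n g i i = 1 := by simp [hL]
      rw [hLi, one_mul]
      have hAij : (Matrix.of fun i j => eval g (Apoly i j)) i j
          = -∑ k ∈ Finset.Ico j i, eval g (XA i j k) := by
        simp only [Matrix.of_apply]
        rw [Apoly_lt hij', map_neg, map_sum]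
      rw [hAij]
      have : ∀ k ∈ Finset.Ico j i,
          unitLT n g i k * (Matrix.of fun i j => eval g (Apoly i j)) k j
            = eval g (XA i j k) := by
        intro k hk
        obtain ⟨hjk, hki⟩ := Finset.mem_Ico.mp hk
        have hik : i ≠ k := fun e => absurd (e ▸ hki) (lt_irrefl _)
        rw [hL, if_neg hik, dif_pos hki, XA, dif_pos hki, map_mul, eval_X]
        rfl
      rw [Finset.sum_congr rfl this]
      ring

lemma sumNat (a : ℕ) : ∀ b : ℕ, a < b →
    ∑ m ∈ Finset.Ico a b, (if a = m then (1:ℝ) else if a < m then 2^(m-a-1) else 0)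
      = 2^(b-a-1) := by
  intro b hb
  induction b, hb using Nat.le_induction with
  | base =>
    rw [Nat.succ_eq_add_one, Finset.Ico_add_one_right_eq_Icc, Finset.Icc_self, Finset.sum_singleton, if_pos rfl]
    simp
  | succ b hab IH =>
    rw [Finset.sum_Ico_succ_top (by omega), IH, if_neg (by omega), if_pos (by omega)]
    have h1 : b + 1 - a - 1 = (b - a - 1) + 1 := by omega
    rw [h1, pow_succ]
    ring

lemma Eexp_Apoly_sq {n : ℕ} (i j : Fin n) :
    Eexp ((Apoly i j)^2)
      = if j = i then 1 else if j < i then (2:ℝ)^(i.val - j.val - 1) else 0 := by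
  classical
  suffices H : ∀ N (i j : Fin n), i.val < N → Eexp ((Apoly i j)^2)
      = if j = i then 1 else if j < i then (2:ℝ)^(i.val - j.val - 1) else 0 from
    H (i.val + 1) i j (Nat.lt_succ_self _)
  intro N
  induction N with
  | zero => exact fun i j h => absurd h (Nat.not_lt_zero _)
  | succ N IH =>
    intro i j hiN
    rcases lt_trichotomy j i with h | h | h
    · rw [if_neg (ne_of_lt h), if_pos h]
      rw [Apoly_lt h, neg_sq, sq, Finset.sum_mul_sum]
      simp_rw [map_sum]
      have hterm : ∀ k ∈ Finset.Ico j i, ∑ l ∈ Finset.Ico j i, Eexp (XA i j k * XA i j l)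
          = if j = k then 1 else if j < k then (2:ℝ)^(k.val - j.val - 1) else 0 := by
        intro k hk
        obtain ⟨hjk, hki⟩ := Finset.mem_Ico.mp hk
        have hrw : ∀ l ∈ Finset.Ico j i, Eexp (XA i j k * XA i j l)
            = if k = l then (if j = k then 1 else if j < k then (2:ℝ)^(k.val - j.val - 1) else 0)
              else 0 := by
          intro l hl
          obtain ⟨hjl, hli⟩ := Finset.mem_Ico.mp hl
          rw [XA, dif_pos hki, XA, dif_pos hli]
          by_cases hkl : k = l
          · subst hkl
            rw [if_pos rfl]
            have hre : (X (⟨(i,k),hki⟩ : Idx n) * Apoly k j) * (X ⟨(i,k),hki⟩ * Apoly k j)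
                = X (⟨(i,k),hki⟩ : Idx n) ^ 2 * (Apoly k j ^ 2) := by ring
            rw [hre, Eexp_X_pow_mul _ 2 _ ?hv, mom_two, one_mul, IH k j (by omega)]
            case hv =>
              intro hmem
              have := Apoly_vars k j _ (vars_pow _ _ hmem)
              simp at this
              omega
          · rw [if_neg hkl]
            have hre : (X (⟨(i,k),hki⟩ : Idx n) * Apoly k j) * (X ⟨(i,l),hli⟩ * Apoly l j)
                = X (⟨(i,k),hki⟩ : Idx n) ^ 1
                    * (X ⟨(i,l),hli⟩ * (Apoly k j * Apoly l j)) := by ring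
            rw [hre, Eexp_X_pow_mul _ 1 _ ?hv2, mom_one, zero_mul]
            case hv2 =>
              intro hmem
              rcases Finset.mem_union.mp (vars_mul _ _ hmem) with h1 | h1
              · rw [vars_X] at h1
                rw [Finset.mem_singleton] at h1
                exact hkl (congrArg (fun p => (p : Idx n).1.2) h1 : k = l)
              · rcases Finset.mem_union.mp (vars_mul _ _ h1) with h2 | h2
                · have := Apoly_vars k j _ h2; simp at this; omega
                · have := Apoly_vars l j _ h2; simp at this; omega
        rw [Finset.sum_congr rfl hrw, Finset.sum_ite_eq (Finset.Ico j i) k, if_pos hk]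
      rw [Finset.sum_congr rfl hterm]
      have hmap : ∑ k ∈ Finset.Ico j i,
          (if j = k then (1:ℝ) else if j < k then 2^(k.val - j.val - 1) else 0)
          = ∑ m ∈ Finset.Ico j.val i.val,
            (if j.val = m then (1:ℝ) else if j.val < m then 2^(m - j.val - 1) else 0) := by
        rw [← Fin.map_valEmbedding_Ico, Finset.sum_map]
        refine Finset.sum_congr rfl fun k _ => ?_
        simp only [Fin.valEmbedding_apply, Fin.ext_iff, Fin.lt_def]
      rw [hmap, sumNat j.val i.val h]
    · rw [h, Apoly_diag, one_pow, Eexp_one, if_pos rfl]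
    · rw [Apoly_upper h, if_neg (ne_of_gt h), if_neg (not_lt_of_gt h)]
      rw [zero_pow two_ne_zero, map_zero]

lemma rowNat (iv n : ℕ) (h : iv < n) :
    ∑ m ∈ Finset.range n,
      (if m = iv then (1:ℝ) else if m < iv then 2^(iv-m-1) else 0) = 2^iv := by
  rw [← Finset.sum_subset (Finset.range_subset_range.mpr h)
    (fun m _ hm => by
      rw [Finset.mem_range, not_lt] at hm
      rw [if_neg (by omega), if_neg (by omega)])]
  rw [Finset.sum_range_succ, if_pos rfl]
  have h1 : ∀ m ∈ Finset.range iv,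
      (if m = iv then (1:ℝ) else if m < iv then 2^(iv-m-1) else 0) = 2^(iv-1-m) := by
    intro m hm
    rw [Finset.mem_range] at hm
    rw [if_neg (by omega), if_pos hm]
    congr 1
    omega
  rw [Finset.sum_congr rfl h1, Finset.sum_range_reflect (fun m => (2:ℝ)^m) iv,
    geom_sum_eq (by norm_num) iv]
  norm_num


end GaussFrob

open GaussFrob MvPolynomial in
/-- Theorem 4.3: for a random n×n unit lower triangular matrix L with
independent standard Gaussian strictly lower triangular entries,
E[‖L⁻¹‖_F²] = 2ⁿ − 1. -/
theorem expected_sq_frobNorm_inv_unitLT (n : ℕ) (hn : 1 ≤ n) :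
    ∫ g, (frobNorm ((unitLT n g)⁻¹))^2 ∂(gaussianUnitLT n) = 2^n - 1 := by
  have hint : ∀ g : Idx n → ℝ,
      (frobNorm ((unitLT n g)⁻¹))^2 = ∑ i, ∑ j, eval g ((Apoly i j)^2) := by
    intro g
    have hinv : (unitLT n g)⁻¹ = Matrix.of fun i j => eval g (Apoly i j) :=
      Matrix.inv_eq_right_inv (unitLT_mul_eval g)
    rw [frobNorm, hinv, Real.sq_sqrt]
    simp_rw [map_pow, Matrix.of_apply]
    positivity
  simp_rw [hint]
  have hμ : gaussianUnitLT n = Measure.pi fun _ : Idx n => gaussianReal 0 1 := rfl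
  rw [hμ, integral_finset_sum _ fun i _ =>
    integrable_finset_sum _ fun j _ => GaussFrob.integrable_eval _]
  have : ∀ i : Fin n, ∫ g : Idx n → ℝ, ∑ j, eval g ((Apoly i j)^2)
        ∂(Measure.pi fun _ : Idx n => gaussianReal 0 1)
      = (2:ℝ)^(i.val) := by
    intro i
    rw [integral_finset_sum _ fun j _ => GaussFrob.integrable_eval _]
    simp_rw [GaussFrob.integral_eval, Eexp_Apoly_sq]
    have h2 : ∑ j : Fin n, (if j = i then (1:ℝ) else if j < i then 2^(i.val-j.val-1) else 0)
        = ∑ m ∈ Finset.range n, (if m = i.val then (1:ℝ) else if m < i.val then 2^(i.val-m-1) else 0) := by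
      rw [← Fin.sum_univ_eq_sum_range]
      refine Finset.sum_congr rfl fun j _ => ?_
      simp only [Fin.ext_iff, Fin.lt_def]
    rw [h2, rowNat i.val n i.isLt]
  rw [Finset.sum_congr rfl fun i _ => this i, Fin.sum_univ_eq_sum_range (fun m => (2:ℝ)^m) n,
    geom_sum_eq (by norm_num) n]
  norm_num
end
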